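/- There exists an absolute constant K > 0 with the following property. Let X, Y be finite nonempty sets, f : X × Y → {0,1} with r = rank(f) ≥ 2, and c ≥ 1 a real number. Suppose that for every nonempty rectangle R ⊆ X × Y there exists a nonempty monochromatic rectangle R' ⊆ R with |R'| ≥ 2^{−c}·|R|. Then X × Y can be partitioned into at most 2^{K·(c + log₂ r)·log₂ r} rectangles, each monochromatic for f. -/

import Mathlib

open Finset Module Matrix

set_option linter.unusedSectionVars false
set_option maxHeartbeats 1000000
set_option synthInstance.maxHeartbeats 1000000

namespace NW

section RankLemmas
variable {m n m' n' : Type*} [Fintype m] [Fintype n] [Fintype m'] [Fintype n']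

lemma rank_eq_finrank_span_row_old (A : Matrix m n ℝ) :
    A.rank = finrank ℝ (Submodule.span ℝ (Set.range A)) := Matrix.rank_eq_finrank_span_row A

lemma rank_eq_finrank_span_cols_old (A : Matrix m n ℝ) :
    A.rank = finrank ℝ (Submodule.span ℝ (Set.range Aᵀ)) := Matrix.rank_eq_finrank_span_cols A

lemma rank_submatrix_le'' (M : Matrix m n ℝ) (u : m' → m) (v : n' → n) :
    (M.submatrix u v).rank ≤ M.rank := by
  rw [Matrix.rank_eq_finrank_span_row, Matrix.rank_eq_finrank_span_row]
  set π : (n → ℝ) →ₗ[ℝ] (n' → ℝ) := LinearMap.funLeft ℝ ℝ v with hπ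
  have hsub : Submodule.span ℝ (Set.range (M.submatrix u v)) ≤
      Submodule.map π (Submodule.span ℝ (Set.range M)) := by
    rw [← Submodule.span_image]
    apply Submodule.span_mono
    rintro w ⟨i, rfl⟩
    exact ⟨M (u i), ⟨u i, rfl⟩, rfl⟩
  calc finrank ℝ (Submodule.span ℝ (Set.range (M.submatrix u v)))
      ≤ finrank ℝ (Submodule.map π (Submodule.span ℝ (Set.range M))) :=
        Submodule.finrank_mono hsub
    _ ≤ finrank ℝ (Submodule.span ℝ (Set.range M)) := Submodule.finrank_map_le _ _

lemma rank_const_sub (e : ℝ) (M : Matrix m n ℝ) :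
    Matrix.rank (Matrix.of (fun i j => e - M i j) : Matrix m n ℝ) ≤ M.rank + 1 := by
  rw [Matrix.rank_eq_finrank_span_row, Matrix.rank_eq_finrank_span_row]
  set c : n → ℝ := fun _ => e with hc
  have hsub : Submodule.span ℝ (Set.range (Matrix.of (fun i j => e - M i j) : Matrix m n ℝ)) ≤
      Submodule.span ℝ {c} ⊔ Submodule.span ℝ (Set.range M) := by
    apply Submodule.span_le.mpr
    rintro w ⟨i, rfl⟩
    have : (Matrix.of (fun i j => e - M i j) : Matrix m n ℝ) i = c - M i := by
      funext j; simp [hc]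
    rw [this]
    exact Submodule.sub_mem _
      (Submodule.mem_sup_left (Submodule.mem_span_singleton_self c))
      (Submodule.mem_sup_right (Submodule.subset_span ⟨i, rfl⟩))
  calc finrank ℝ (Submodule.span ℝ (Set.range (Matrix.of (fun i j => e - M i j) : Matrix m n ℝ)))
      ≤ finrank ℝ ↥(Submodule.span ℝ {c} ⊔ Submodule.span ℝ (Set.range M)) :=
        Submodule.finrank_mono hsub
    _ ≤ finrank ℝ (Submodule.span ℝ {c}) + finrank ℝ (Submodule.span ℝ (Set.range M)) :=
        Submodule.finrank_add_le_finrank_add_finrank _ _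
    _ ≤ 1 + M.rank := by
        have h1 : finrank ℝ (Submodule.span ℝ ({c} : Set (n → ℝ))) ≤ 1 := by
          calc finrank ℝ (Submodule.span ℝ ({c} : Set (n → ℝ)))
              ≤ ({c} : Set (n → ℝ)).toFinset.card := finrank_span_le_card _
            _ ≤ 1 := by simp
        have h2 : finrank ℝ (Submodule.span ℝ (Set.range M)) = M.rank :=
          (Matrix.rank_eq_finrank_span_row M).symm
        omega
    _ = M.rank + 1 := add_comm _ _
    _ = finrank ℝ (Submodule.span ℝ (Set.range M)) + 1 := by rw [rank_eq_finrank_span_row_old]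

lemma rank_zero_block (M : Matrix m n ℝ) (P : m → Prop) (Q : n → Prop)
    [DecidablePred P] [DecidablePred Q]
    (h : ∀ i j, P i → Q j → M i j = 0) :
    (M.submatrix (Subtype.val : {i // P i} → m) id).rank
      + (M.submatrix id (Subtype.val : {j // Q j} → n)).rank ≤ M.rank := by
  set V : Submodule ℝ (n → ℝ) := Submodule.span ℝ (Set.range M) with hV
  set π : (n → ℝ) →ₗ[ℝ] ({j // Q j} → ℝ) := LinearMap.funLeft ℝ ℝ Subtype.val with hπ
  set f₀ : V →ₗ[ℝ] ({j // Q j} → ℝ) := π.comp V.subtype with hf₀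
  have hrn : finrank ℝ (LinearMap.range f₀) + finrank ℝ (LinearMap.ker f₀) = finrank ℝ V :=
    LinearMap.finrank_range_add_finrank_ker f₀
  have hcols : (M.submatrix id (Subtype.val : {j // Q j} → n)).rank
      = finrank ℝ (LinearMap.range f₀) := by
    rw [rank_eq_finrank_span_row_old]
    have h1 : Set.range (M.submatrix id (Subtype.val : {j // Q j} → n)) = π '' Set.range M := by
      exact Set.range_comp (⇑π) M
    have h2 : Submodule.span ℝ (Set.range (M.submatrix id (Subtype.val : {j // Q j} → n)))
        = LinearMap.range f₀ := by
      rw [h1, Submodule.span_image, hf₀, LinearMap.range_comp, Submodule.range_subtype]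
    rw [h2]
  have hW : Submodule.span ℝ (Set.range (M.submatrix (Subtype.val : {i // P i} → m) id)) ≤ V := by
    apply Submodule.span_le.mpr
    rintro w ⟨i, rfl⟩
    exact Submodule.subset_span ⟨i.1, rfl⟩
  set W := Submodule.span ℝ (Set.range (M.submatrix (Subtype.val : {i // P i} → m) id)) with hWdef
  have hrows : (M.submatrix (Subtype.val : {i // P i} → m) id).rank ≤
      finrank ℝ (LinearMap.ker f₀) := by
    rw [rank_eq_finrank_span_row_old]
    have hWk : W ≤ LinearMap.ker π := by
      apply Submodule.span_le.mpr
      rintro w ⟨i, rfl⟩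
      simp only [SetLike.mem_coe, LinearMap.mem_ker]
      funext j
      exact h i.1 j.1 i.2 j.2
    have e1 : finrank ℝ W = finrank ℝ (Submodule.comap V.subtype W) :=
      (LinearEquiv.finrank_eq (Submodule.comapSubtypeEquivOfLe hW)).symm
    rw [← hWdef, e1]
    apply Submodule.finrank_mono
    intro v hv
    simp only [Submodule.mem_comap] at hv
    simp only [LinearMap.mem_ker, hf₀, LinearMap.comp_apply]
    exact hWk hv
  rw [rank_eq_finrank_span_row_old (A := M), ← hV, ← hrn, hcols]
  omega

lemma rank_const_block (M : Matrix m n ℝ) (P : m → Prop) (Q : n → Prop)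
    [DecidablePred P] [DecidablePred Q] (e : ℝ)
    (h : ∀ i j, P i → Q j → M i j = e) :
    (M.submatrix (Subtype.val : {i // P i} → m) id).rank
      + (M.submatrix id (Subtype.val : {j // Q j} → n)).rank ≤ M.rank + 3 := by
  set N : Matrix m n ℝ := Matrix.of (fun i j => e - M i j) with hN
  have h0 : ∀ i j, P i → Q j → N i j = 0 := by
    intro i j hi hj
    simp [hN, h i j hi hj]
  have hkey := rank_zero_block N P Q h0
  have hM1 : (M.submatrix (Subtype.val : {i // P i} → m) id)
      = Matrix.of (fun i j => e - (N.submatrix (Subtype.val : {i // P i} → m) id) i j) := by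
    ext i j; simp [hN]
  have hM2 : (M.submatrix id (Subtype.val : {j // Q j} → n))
      = Matrix.of (fun i j => e - (N.submatrix id (Subtype.val : {j // Q j} → n)) i j) := by
    ext i j; simp [hN]
  have hr1 : (M.submatrix (Subtype.val : {i // P i} → m) id).rank
      ≤ (N.submatrix (Subtype.val : {i // P i} → m) id).rank + 1 := by
    rw [hM1]; exact rank_const_sub _ _
  have hr2 : (M.submatrix id (Subtype.val : {j // Q j} → n)).rank
      ≤ (N.submatrix id (Subtype.val : {j // Q j} → n)).rank + 1 := by
    rw [hM2]; exact rank_const_sub _ _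
  have hNM : N.rank ≤ M.rank + 1 := rank_const_sub _ _
  omega

lemma image_card_le_of_determines {α β γ : Type*} [Fintype α] [DecidableEq β] [DecidableEq γ]
    [Inhabited γ] (Φ : α → β) (g : α → γ)
    (h : ∀ a a', Φ a = Φ a' → g a = g a') :
    (Finset.univ.image g).card ≤ (Finset.univ.image Φ).card := by
  classical
  set F : β → γ := fun φ => if hx : ∃ a, Φ a = φ then g hx.choose else default with hF
  have himg : Finset.univ.image g = (Finset.univ.image Φ).image F := by
    ext c
    simp only [Finset.mem_image, Finset.mem_univ, true_and]
    constructor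
    · rintro ⟨a, rfl⟩
      refine ⟨Φ a, ⟨a, rfl⟩, ?_⟩
      rw [hF]
      have hx : ∃ a', Φ a' = Φ a := ⟨a, rfl⟩
      simp only [hx, dif_pos]
      exact h _ _ hx.choose_spec
    · rintro ⟨φ, ⟨a, rfl⟩, rfl⟩
      refine ⟨(⟨a, rfl⟩ : ∃ a', Φ a' = Φ a).choose, ?_⟩
      rw [hF]
      have hx : ∃ a', Φ a' = Φ a := ⟨a, rfl⟩
      simp only [hx, dif_pos]
  rw [himg]
  exact Finset.card_image_le

end RankLemmas

variable {X Y : Type} [Fintype X] [Fintype Y] [DecidableEq X] [DecidableEq Y]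

/-- monochromatic rectangle -/
def Mono (f : X → Y → Bool) (A : Finset X) (B : Finset Y) : Prop :=
  ∀ x ∈ A, ∀ y ∈ B, ∀ x' ∈ A, ∀ y' ∈ B, f x y = f x' y'

/-- partition of A×B into at most n nonempty monochromatic rectangles -/
def PartB (f : X → Y → Bool) (A : Finset X) (B : Finset Y) (n : ℕ) : Prop :=
  ∃ S : Finset (Finset X × Finset Y), S.card ≤ n ∧
    (∀ r ∈ S, r.1 ⊆ A ∧ r.2 ⊆ B ∧ r.1.Nonempty ∧ r.2.Nonempty ∧ Mono f r.1 r.2) ∧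
    (∀ x ∈ A, ∀ y ∈ B, ∃! r : Finset X × Finset Y, r ∈ S ∧ x ∈ r.1 ∧ y ∈ r.2)

def rowB (f : X → Y → Bool) (B : Finset Y) (x : X) : Finset Y := B.filter (fun y => f x y)
def colA (f : X → Y → Bool) (A : Finset X) (y : Y) : Finset X := A.filter (fun x => f x y)
def Dr (f : X → Y → Bool) (A : Finset X) (B : Finset Y) : ℕ := (A.image (rowB f B)).card
def Dc (f : X → Y → Bool) (A : Finset X) (B : Finset Y) : ℕ := (B.image (colA f A)).card

noncomputable def matr (f : X → Y → Bool) (A : Finset X) (B : Finset Y) : Matrix ↥A ↥B ℝ :=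
  Matrix.of (fun a b => if f a.1 b.1 then (1 : ℝ) else 0)

noncomputable def rk (f : X → Y → Bool) (A : Finset X) (B : Finset Y) : ℕ := (matr f A B).rank

theorem PartB.mono_n {f : X → Y → Bool} {A B} {n m : ℕ} (h : PartB f A B n) (hnm : n ≤ m) :
    PartB f A B m := by
  obtain ⟨S, h1, h2, h3⟩ := h
  exact ⟨S, h1.trans hnm, h2, h3⟩

lemma rowB_eq_apply {f : X → Y → Bool} {B : Finset Y} {x x' : X}
    (h : rowB f B x = rowB f B x') {y : Y} (hy : y ∈ B) : f x y = f x' y := by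
  have h1 : (y ∈ rowB f B x) = (y ∈ rowB f B x') := by rw [h]
  simp only [rowB, Finset.mem_filter, hy, true_and] at h1
  cases hxy : f x y <;> cases hxy' : f x' y <;> simp_all

lemma colA_eq_apply {f : X → Y → Bool} {A : Finset X} {y y' : Y}
    (h : colA f A y = colA f A y') {x : X} (hx : x ∈ A) : f x y = f x y' := by
  have h1 : (x ∈ colA f A y) = (x ∈ colA f A y') := by rw [h]
  simp only [colA, Finset.mem_filter, hx, true_and] at h1
  cases hxy : f x y <;> cases hxy' : f x y' <;> simp_all

theorem PartB_class (f : X → Y → Bool) (A : Finset X) (B : Finset Y) :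
    PartB f A B (Dr f A B * Dc f A B) := by
  classical
  set S : Finset (Finset X × Finset Y) :=
    ((A.image (rowB f B)) ×ˢ (B.image (colA f A))).image
      (fun st => (A.filter (fun x => rowB f B x = st.1), B.filter (fun y => colA f A y = st.2)))
    with hS
  refine ⟨S, ?_, ?_, ?_⟩
  · calc S.card ≤ _ := Finset.card_image_le
      _ = Dr f A B * Dc f A B := by rw [Finset.card_product]; rfl
  · rintro r hr
    simp only [hS, Finset.mem_image, Finset.mem_product] at hr
    obtain ⟨⟨s, t⟩, ⟨hs, ht⟩, rfl⟩ := hr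
    obtain ⟨x0, hx0, hx0s⟩ := hs
    obtain ⟨y0, hy0, hy0t⟩ := ht
    refine ⟨Finset.filter_subset _ _, Finset.filter_subset _ _,
      ⟨x0, Finset.mem_filter.mpr ⟨hx0, hx0s⟩⟩, ⟨y0, Finset.mem_filter.mpr ⟨hy0, hy0t⟩⟩, ?_⟩
    intro x hx y hy x' hx' y' hy'
    simp only [Finset.mem_filter] at hx hy hx' hy'
    have h1 : f x y = f x' y := rowB_eq_apply (hx.2.trans hx'.2.symm) hy.1
    have h2 : f x' y = f x' y' := colA_eq_apply (hy.2.trans hy'.2.symm) hx'.1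
    exact h1.trans h2
  · intro x hx y hy
    refine ⟨(A.filter (fun x' => rowB f B x' = rowB f B x),
             B.filter (fun y' => colA f A y' = colA f A y)), ?_, ?_⟩
    · refine ⟨?_, Finset.mem_filter.mpr ⟨hx, rfl⟩, Finset.mem_filter.mpr ⟨hy, rfl⟩⟩
      rw [hS]
      refine Finset.mem_image.mpr ⟨(rowB f B x, colA f A y), ?_, rfl⟩
      exact Finset.mem_product.mpr ⟨Finset.mem_image_of_mem _ hx, Finset.mem_image_of_mem _ hy⟩
    · rintro r ⟨hrS, hrx, hry⟩
      simp only [hS, Finset.mem_image, Finset.mem_product] at hrS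
      obtain ⟨⟨s, t⟩, ⟨hs, ht⟩, rfl⟩ := hrS
      simp only [Finset.mem_filter] at hrx hry
      simp [hrx.2, hry.2]

theorem PartB_split_rows {f : X → Y → Bool} {A A1 A2 : Finset X} {B : Finset Y} {n1 n2 : ℕ}
    (hdisj : Disjoint A1 A2) (hun : A1 ∪ A2 = A)
    (h1 : PartB f A1 B n1) (h2 : PartB f A2 B n2) : PartB f A B (n1 + n2) := by
  classical
  obtain ⟨S1, hc1, hr1, hu1⟩ := h1
  obtain ⟨S2, hc2, hr2, hu2⟩ := h2
  refine ⟨S1 ∪ S2, ?_, ?_, ?_⟩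
  · calc (S1 ∪ S2).card ≤ S1.card + S2.card := Finset.card_union_le _ _
      _ ≤ n1 + n2 := Nat.add_le_add hc1 hc2
  · intro r hr
    rcases Finset.mem_union.mp hr with h | h
    · obtain ⟨a, b, c, d, e⟩ := hr1 r h
      exact ⟨a.trans (hun ▸ Finset.subset_union_left), b, c, d, e⟩
    · obtain ⟨a, b, c, d, e⟩ := hr2 r h
      exact ⟨a.trans (hun ▸ Finset.subset_union_right), b, c, d, e⟩
  · intro x hx y hy
    have hx' : x ∈ A1 ∪ A2 := hun ▸ hx
    rcases Finset.mem_union.mp hx' with h | h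
    · obtain ⟨r, ⟨hrS, hrx, hry⟩, hrun⟩ := hu1 x h y hy
      refine ⟨r, ⟨Finset.mem_union_left _ hrS, hrx, hry⟩, ?_⟩
      intro r' ⟨hr'S, hr'x, hr'y⟩
      rcases Finset.mem_union.mp hr'S with h' | h'
      · exact hrun r' ⟨h', hr'x, hr'y⟩
      · exact absurd ((hr2 r' h').1 hr'x) (Finset.disjoint_left.mp hdisj h)
    · obtain ⟨r, ⟨hrS, hrx, hry⟩, hrun⟩ := hu2 x h y hy
      refine ⟨r, ⟨Finset.mem_union_right _ hrS, hrx, hry⟩, ?_⟩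
      intro r' ⟨hr'S, hr'x, hr'y⟩
      rcases Finset.mem_union.mp hr'S with h' | h'
      · exact absurd ((hr1 r' h').1 hr'x) (Finset.disjoint_right.mp hdisj h)
      · exact hrun r' ⟨h', hr'x, hr'y⟩

theorem PartB_split_cols {f : X → Y → Bool} {A : Finset X} {B B1 B2 : Finset Y} {n1 n2 : ℕ}
    (hdisj : Disjoint B1 B2) (hun : B1 ∪ B2 = B)
    (h1 : PartB f A B1 n1) (h2 : PartB f A B2 n2) : PartB f A B (n1 + n2) := by
  classical
  obtain ⟨S1, hc1, hr1, hu1⟩ := h1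
  obtain ⟨S2, hc2, hr2, hu2⟩ := h2
  refine ⟨S1 ∪ S2, ?_, ?_, ?_⟩
  · calc (S1 ∪ S2).card ≤ S1.card + S2.card := Finset.card_union_le _ _
      _ ≤ n1 + n2 := Nat.add_le_add hc1 hc2
  · intro r hr
    rcases Finset.mem_union.mp hr with h | h
    · obtain ⟨a, b, c, d, e⟩ := hr1 r h
      exact ⟨a, b.trans (hun ▸ Finset.subset_union_left), c, d, e⟩
    · obtain ⟨a, b, c, d, e⟩ := hr2 r h
      exact ⟨a, b.trans (hun ▸ Finset.subset_union_right), c, d, e⟩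
  · intro x hx y hy
    have hy' : y ∈ B1 ∪ B2 := hun ▸ hy
    rcases Finset.mem_union.mp hy' with h | h
    · obtain ⟨r, ⟨hrS, hrx, hry⟩, hrun⟩ := hu1 x hx y h
      refine ⟨r, ⟨Finset.mem_union_left _ hrS, hrx, hry⟩, ?_⟩
      intro r' ⟨hr'S, hr'x, hr'y⟩
      rcases Finset.mem_union.mp hr'S with h' | h'
      · exact hrun r' ⟨h', hr'x, hr'y⟩
      · exact absurd ((hr2 r' h').2.1 hr'y) (Finset.disjoint_left.mp hdisj h)
    · obtain ⟨r, ⟨hrS, hrx, hry⟩, hrun⟩ := hu2 x hx y h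
      refine ⟨r, ⟨Finset.mem_union_right _ hrS, hrx, hry⟩, ?_⟩
      intro r' ⟨hr'S, hr'x, hr'y⟩
      rcases Finset.mem_union.mp hr'S with h' | h'
      · exact absurd ((hr1 r' h').2.1 hr'y) (Finset.disjoint_right.mp hdisj h)
      · exact hrun r' ⟨h', hr'x, hr'y⟩

lemma rk_mono {f : X → Y → Bool} {A' A : Finset X} {B' B : Finset Y}
    (hA : A' ⊆ A) (hB : B' ⊆ B) : rk f A' B' ≤ rk f A B := by
  have : matr f A' B' = (matr f A B).submatrix
      (fun a => (⟨a.1, hA a.2⟩ : ↥A)) (fun b => (⟨b.1, hB b.2⟩ : ↥B)) := rfl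
  rw [rk, rk, this]
  exact rank_submatrix_le'' _ _ _

lemma rk_mono_split {f : X → Y → Bool} {A' A : Finset X} {B' B : Finset Y}
    (hA : A' ⊆ A) (hB : B' ⊆ B) (v : Bool)
    (h : ∀ x ∈ A', ∀ y ∈ B', f x y = v) :
    rk f A' B + rk f A B' ≤ rk f A B + 3 := by
  classical
  set M := matr f A B with hM
  set P : ↥A → Prop := fun a => a.1 ∈ A' with hP
  set Q : ↥B → Prop := fun b => b.1 ∈ B' with hQ
  set e : ℝ := if v then 1 else 0 with he
  have hblock : ∀ i j, P i → Q j → M i j = e := by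
    intro i j hi hj
    simp only [hM, matr, Matrix.of_apply, he]
    rw [h i.1 hi j.1 hj]
  have hkey := rank_const_block M P Q e hblock
  have h1 : rk f A' B ≤ (M.submatrix (Subtype.val : {i // P i} → ↥A) id).rank := by
    have : matr f A' B = (M.submatrix (Subtype.val : {i // P i} → ↥A) id).submatrix
        (fun a : ↥A' => (⟨⟨a.1, hA a.2⟩, a.2⟩ : {i // P i})) id := rfl
    rw [rk, this]
    exact rank_submatrix_le'' _ _ _
  have h2 : rk f A B' ≤ (M.submatrix id (Subtype.val : {j // Q j} → ↥B)).rank := by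
    have : matr f A B' = (M.submatrix id (Subtype.val : {j // Q j} → ↥B)).submatrix
        id (fun b : ↥B' => (⟨⟨b.1, hB b.2⟩, b.2⟩ : {j // Q j})) := rfl
    rw [rk, this]
    exact rank_submatrix_le'' _ _ _
  have : rk f A B = M.rank := rfl
  omega

lemma Dr_le_pow (f : X → Y → Bool) (A : Finset X) (B : Finset Y) :
    Dr f A B ≤ 2 ^ rk f A B := by
  classical
  set M := matr f A B with hM
  obtain ⟨s, hs_sub, hs_span, hs_li⟩ := exists_linearIndependent ℝ (Set.range Mᵀ)
  have hs_fin : s.Finite := hs_li.finite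
  letI : Fintype s := hs_fin.fintype
  have hcard_s : Fintype.card s = M.rank := by
    rw [rank_eq_finrank_span_cols_old, ← hs_span]
    rw [finrank_span_set_eq_card hs_li]
    exact (Set.toFinset_card s).symm
  have hs01 : ∀ w ∈ s, ∀ a : ↥A, w a = 0 ∨ w a = 1 := by
    intro w hw a
    obtain ⟨b, rfl⟩ := hs_sub hw
    by_cases hfb : f a.1 b.1
    · right; simp [hM, matr, Matrix.transpose_apply, hfb]
    · left; simp [hM, matr, Matrix.transpose_apply, hfb]
  have hdet : ∀ a a' : ↥A, (∀ w ∈ s, w a = w a') → ∀ b : ↥B, M a b = M a' b := by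
    intro a a' hw b
    have hcol : Mᵀ b ∈ Submodule.span ℝ s := by
      rw [hs_span]
      exact Submodule.subset_span ⟨b, rfl⟩
    obtain ⟨c, hcsup, hcsum⟩ := Submodule.mem_span_set.mp hcol
    have hev : ∀ aa : ↥A, Mᵀ b aa = c.sum (fun v r => r * v aa) := by
      intro aa
      rw [← hcsum]
      simp [Finsupp.sum, Finset.sum_apply]
    rw [show M a b = Mᵀ b a from rfl, show M a' b = Mᵀ b a' from rfl, hev a, hev a']
    apply Finsupp.sum_congr
    intro v hv
    rw [hw v (hcsup hv)]
  set Φ : ↥A → (s → Bool) := fun a w => decide (w.1 a = 1) with hΦ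
  have hΦdet : ∀ a a', Φ a = Φ a' → rowB f B a.1 = rowB f B a'.1 := by
    intro a a' hφ
    have hweq : ∀ w ∈ s, w a = w a' := by
      intro w hw
      have h1 := congrFun hφ ⟨w, hw⟩
      simp only [hΦ, decide_eq_decide] at h1
      rcases hs01 w hw a with h2 | h2 <;> rcases hs01 w hw a' with h3 | h3 <;>
        simp_all
    have hMeq := hdet a a' hweq
    ext y
    simp only [rowB, Finset.mem_filter]
    constructor
    · rintro ⟨hyB, hfy⟩
      refine ⟨hyB, ?_⟩
      have := hMeq ⟨y, hyB⟩
      simp only [hM, matr, Matrix.of_apply, hfy, if_true] at this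
      by_contra hc
      simp only [Bool.not_eq_true] at hc
      rw [hc] at this
      norm_num at this
    · rintro ⟨hyB, hfy⟩
      refine ⟨hyB, ?_⟩
      have := hMeq ⟨y, hyB⟩
      simp only [hM, matr, Matrix.of_apply, hfy, if_true] at this
      by_contra hc
      simp only [Bool.not_eq_true] at hc
      rw [hc] at this
      norm_num at this
  have h1 : Dr f A B = (Finset.univ.image (fun a : ↥A => rowB f B a.1)).card := by
    rw [Dr, Finset.univ_eq_attach]
    congr 1
    ext s
    simp [Finset.mem_image]
  rw [h1]
  calc (Finset.univ.image (fun a : ↥A => rowB f B a.1)).card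
      ≤ (Finset.univ.image Φ).card :=
        image_card_le_of_determines Φ _ hΦdet
    _ ≤ Fintype.card (s → Bool) := by simpa using Finset.card_le_univ (Finset.univ.image Φ)
    _ = 2 ^ Fintype.card s := by rw [Fintype.card_fun]; rfl
    _ = 2 ^ rk f A B := by rw [hcard_s]; rfl

lemma Dc_le_pow (f : X → Y → Bool) (A : Finset X) (B : Finset Y) :
    Dc f A B ≤ 2 ^ rk f A B := by
  have h1 : Dc f A B = Dr (fun y x => f x y) B A := rfl
  have h2 : rk (fun y x => f x y) B A = rk f A B := by
    have : matr (fun y x => f x y) B A = (matr f A B)ᵀ := rfl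
    rw [rk, rk, this, Matrix.rank_transpose]
  rw [h1, ← h2]
  exact Dr_le_pow _ _ _

lemma Dc_anti_left {f : X → Y → Bool} {A' A : Finset X} (B : Finset Y) (h : A' ⊆ A) :
    Dc f A' B ≤ Dc f A B := by
  classical
  have hcol : ∀ y, colA f A' y = A' ∩ colA f A y := by
    intro y
    ext x
    simp only [colA, Finset.mem_filter, Finset.mem_inter]
    exact ⟨fun ⟨hx, hf⟩ => ⟨hx, h hx, hf⟩, fun ⟨hx, _, hf⟩ => ⟨hx, hf⟩⟩
  have : B.image (colA f A') = (B.image (colA f A)).image (fun S => A' ∩ S) := by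
    rw [Finset.image_image]
    apply Finset.image_congr
    intro y _
    exact hcol y
  rw [Dc, this]
  exact Finset.card_image_le

lemma Dr_anti_right {f : X → Y → Bool} (A : Finset X) {B' B : Finset Y} (h : B' ⊆ B) :
    Dr f A B' ≤ Dr f A B := by
  classical
  have hrow : ∀ x, rowB f B' x = B' ∩ rowB f B x := by
    intro x
    ext y
    simp only [rowB, Finset.mem_filter, Finset.mem_inter]
    exact ⟨fun ⟨hy, hf⟩ => ⟨hy, h hy, hf⟩, fun ⟨hy, _, hf⟩ => ⟨hy, hf⟩⟩
  have : A.image (rowB f B') = (A.image (rowB f B)).image (fun S => B' ∩ S) := by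
    rw [Finset.image_image]
    apply Finset.image_congr
    intro x _
    exact hrow x
  rw [Dr, this]
  exact Finset.card_image_le

lemma exists_reps {α β : Type*} [DecidableEq α] [DecidableEq β] (A : Finset α) (g : α → β) :
    ∃ A', A' ⊆ A ∧ A'.image g = A.image g ∧ A'.card = (A.image g).card := by
  classical
  induction A using Finset.induction_on with
  | empty => exact ⟨∅, by simp⟩
  | @insert a A ha ih =>
    obtain ⟨A', hsub, himg, hcard⟩ := ih
    by_cases hmem : g a ∈ A.image g
    · refine ⟨A', hsub.trans (Finset.subset_insert _ _), ?_, ?_⟩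
      · rw [Finset.image_insert, Finset.insert_eq_self.mpr hmem, himg]
      · rw [Finset.image_insert, Finset.insert_eq_self.mpr hmem, hcard]
    · have haA' : a ∉ A' := fun h => hmem (by
        rw [← himg]; exact Finset.mem_image_of_mem g h)
      have hgaA' : g a ∉ A'.image g := by rw [himg]; exact hmem
      refine ⟨insert a A', Finset.insert_subset_insert _ hsub, ?_, ?_⟩
      · rw [Finset.image_insert, Finset.image_insert, himg]
      · rw [Finset.image_insert, Finset.card_insert_of_notMem haA',
          Finset.card_insert_of_notMem hmem, hcard]

lemma step_lemma (f : X → Y → Bool) {A : Finset X} {B : Finset Y} (c : ℝ)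
    (hyp : ∀ A₀ : Finset X, ∀ B₀ : Finset Y, A₀.Nonempty → B₀.Nonempty →
      ∃ (A' : Finset X) (B' : Finset Y), A' ⊆ A₀ ∧ B' ⊆ B₀ ∧ A'.Nonempty ∧ B'.Nonempty ∧
        (2 : ℝ) ^ (-c) * (A₀.card * B₀.card : ℝ) ≤ (A'.card * B'.card : ℝ) ∧
        Mono f A' B')
    (hA : A.Nonempty) (hB : B.Nonempty) :
    ∃ (A1 : Finset X) (B1 : Finset Y), A1 ⊆ A ∧ B1 ⊆ B ∧ A1.Nonempty ∧ B1.Nonempty ∧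
      rk f A1 B + rk f A B1 ≤ rk f A B + 3 ∧
      ((Dr f (A \ A1) B : ℝ) ≤ (1 - (2 : ℝ) ^ (-c)) * (Dr f A B : ℝ)) ∧
      ((Dc f A (B \ B1) : ℝ) ≤ (1 - (2 : ℝ) ^ (-c)) * (Dc f A B : ℝ)) := by
  classical
  obtain ⟨Arep, hArep_sub, hArep_img, hArep_card⟩ := exists_reps A (rowB f B)
  obtain ⟨Brep, hBrep_sub, hBrep_img, hBrep_card⟩ := exists_reps B (colA f A)
  have hArep_inj : Set.InjOn (rowB f B) Arep := by
    rw [← Finset.card_image_iff, hArep_img, ← hArep_card]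
  have hBrep_inj : Set.InjOn (colA f A) Brep := by
    rw [← Finset.card_image_iff, hBrep_img, ← hBrep_card]
  have hArep_ne : Arep.Nonempty := by
    rw [← Finset.card_pos, hArep_card, Finset.card_pos]
    exact hA.image _
  have hBrep_ne : Brep.Nonempty := by
    rw [← Finset.card_pos, hBrep_card, Finset.card_pos]
    exact hB.image _
  obtain ⟨A', B', hA'sub, hB'sub, hA'ne, hB'ne, hden, hmono⟩ := hyp Arep Brep hArep_ne hBrep_ne
  have hDr_pos : 0 < Dr f A B := by rw [Dr, Finset.card_pos]; exact hA.image _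
  have hDc_pos : 0 < Dc f A B := by rw [Dc, Finset.card_pos]; exact hB.image _
  -- density lower bounds on |A'| and |B'|
  have hA'le : (A'.card : ℝ) ≤ Dr f A B := by
    have h1 : A'.card ≤ Arep.card := Finset.card_le_card hA'sub
    rw [hArep_card] at h1
    exact_mod_cast h1
  have hB'le : (B'.card : ℝ) ≤ Dc f A B := by
    have h1 : B'.card ≤ Brep.card := Finset.card_le_card hB'sub
    rw [hBrep_card] at h1
    exact_mod_cast h1
  have hden' : (2 : ℝ) ^ (-c) * ((Dr f A B : ℝ) * (Dc f A B : ℝ)) ≤ A'.card * B'.card := by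
    have := hden
    rw [hArep_card, hBrep_card] at this
    exact_mod_cast this
  have hA'ge : (2 : ℝ) ^ (-c) * (Dr f A B : ℝ) ≤ A'.card := by
    have h1 : (2 : ℝ) ^ (-c) * ((Dr f A B : ℝ) * (Dc f A B : ℝ)) ≤ (A'.card : ℝ) * Dc f A B := by
      calc (2 : ℝ) ^ (-c) * ((Dr f A B : ℝ) * (Dc f A B : ℝ)) ≤ A'.card * B'.card := hden'
        _ ≤ (A'.card : ℝ) * Dc f A B := by
            apply mul_le_mul_of_nonneg_left hB'le (by positivity)
    have hDc' : (0 : ℝ) < Dc f A B := by exact_mod_cast hDc_pos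
    nlinarith [hDc']
  have hB'ge : (2 : ℝ) ^ (-c) * (Dc f A B : ℝ) ≤ B'.card := by
    have h1 : (2 : ℝ) ^ (-c) * ((Dr f A B : ℝ) * (Dc f A B : ℝ)) ≤ (Dr f A B : ℝ) * B'.card := by
      calc (2 : ℝ) ^ (-c) * ((Dr f A B : ℝ) * (Dc f A B : ℝ)) ≤ A'.card * B'.card := hden'
        _ ≤ (Dr f A B : ℝ) * B'.card := by
            apply mul_le_mul_of_nonneg_right hA'le (by positivity)
    have hDr' : (0 : ℝ) < Dr f A B := by exact_mod_cast hDr_pos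
    nlinarith [hDr']
  -- saturated rectangles
  set A1 : Finset X := A.filter (fun x => ∃ x' ∈ A', rowB f B x = rowB f B x') with hA1
  set B1 : Finset Y := B.filter (fun y => ∃ y' ∈ B', colA f A y = colA f A y') with hB1
  have hA1sub : A1 ⊆ A := Finset.filter_subset _ _
  have hB1sub : B1 ⊆ B := Finset.filter_subset _ _
  have hA'A1 : A' ⊆ A1 := by
    intro x hx
    refine Finset.mem_filter.mpr ⟨hArep_sub (hA'sub hx), ⟨x, hx, rfl⟩⟩
  have hB'B1 : B' ⊆ B1 := by
    intro y hy
    refine Finset.mem_filter.mpr ⟨hBrep_sub (hB'sub hy), ⟨y, hy, rfl⟩⟩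
  obtain ⟨x₀, hx₀⟩ := hA'ne
  obtain ⟨y₀, hy₀⟩ := hB'ne
  set v : Bool := f x₀ y₀ with hv
  have hmono1 : ∀ x ∈ A1, ∀ y ∈ B1, f x y = v := by
    intro x hx y hy
    obtain ⟨hxA, x', hx', hrow⟩ := Finset.mem_filter.mp hx
    obtain ⟨hyB, y', hy', hcol⟩ := Finset.mem_filter.mp hy
    have e1 : f x y = f x' y := rowB_eq_apply hrow hyB
    have e2 : f x' y = f x' y' := colA_eq_apply hcol (hArep_sub (hA'sub hx'))
    have e3 : f x' y' = f x₀ y₀ := hmono x' hx' y' hy' x₀ hx₀ y₀ hy₀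
    rw [e1, e2, e3, hv]
  have hrk := rk_mono_split hA1sub hB1sub v hmono1
  -- Dr decrease
  have hDrdec : (Dr f (A \ A1) B : ℝ) ≤ (1 - (2 : ℝ) ^ (-c)) * (Dr f A B : ℝ) := by
    have himg_disj : Disjoint (A1.image (rowB f B)) ((A \ A1).image (rowB f B)) := by
      rw [Finset.disjoint_left]
      rintro s hs1 hs2
      obtain ⟨x1, hx1, rfl⟩ := Finset.mem_image.mp hs1
      obtain ⟨x2, hx2, heq⟩ := Finset.mem_image.mp hs2
      obtain ⟨hx2A, hx2n⟩ := Finset.mem_sdiff.mp hx2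
      apply hx2n
      obtain ⟨_, x', hx', hrow⟩ := Finset.mem_filter.mp hx1
      exact Finset.mem_filter.mpr ⟨hx2A, ⟨x', hx', heq.trans hrow⟩⟩
    have himg_un : A.image (rowB f B) = A1.image (rowB f B) ∪ (A \ A1).image (rowB f B) := by
      rw [← Finset.image_union, Finset.union_sdiff_of_subset hA1sub]
    have hcard_eq : Dr f A B = (A1.image (rowB f B)).card + Dr f (A \ A1) B := by
      rw [Dr, Dr, himg_un, Finset.card_union_of_disjoint himg_disj]
    have hA1img_ge : (A'.card : ℝ) ≤ ((A1.image (rowB f B)).card : ℝ) := by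
      have h1 : A'.image (rowB f B) ⊆ A1.image (rowB f B) := Finset.image_subset_image hA'A1
      have h2 : (A'.image (rowB f B)).card = A'.card :=
        Finset.card_image_of_injOn (hArep_inj.mono (by exact_mod_cast hA'sub))
      exact_mod_cast h2 ▸ Finset.card_le_card h1
    have := hA'ge
    have hcast : (Dr f (A \ A1) B : ℝ) = (Dr f A B : ℝ) - ((A1.image (rowB f B)).card : ℝ) := by
      rw [hcard_eq]; push_cast; ring
    rw [hcast]
    nlinarith
  -- Dc decrease
  have hDcdec : (Dc f A (B \ B1) : ℝ) ≤ (1 - (2 : ℝ) ^ (-c)) * (Dc f A B : ℝ) := by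
    have himg_disj : Disjoint (B1.image (colA f A)) ((B \ B1).image (colA f A)) := by
      rw [Finset.disjoint_left]
      rintro s hs1 hs2
      obtain ⟨y1, hy1, rfl⟩ := Finset.mem_image.mp hs1
      obtain ⟨y2, hy2, heq⟩ := Finset.mem_image.mp hs2
      obtain ⟨hy2B, hy2n⟩ := Finset.mem_sdiff.mp hy2
      apply hy2n
      obtain ⟨_, y', hy', hcol⟩ := Finset.mem_filter.mp hy1
      exact Finset.mem_filter.mpr ⟨hy2B, ⟨y', hy', heq.trans hcol⟩⟩
    have himg_un : B.image (colA f A) = B1.image (colA f A) ∪ (B \ B1).image (colA f A) := by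
      rw [← Finset.image_union, Finset.union_sdiff_of_subset hB1sub]
    have hcard_eq : Dc f A B = (B1.image (colA f A)).card + Dc f A (B \ B1) := by
      rw [Dc, Dc, himg_un, Finset.card_union_of_disjoint himg_disj]
    have hB1img_ge : (B'.card : ℝ) ≤ ((B1.image (colA f A)).card : ℝ) := by
      have h1 : B'.image (colA f A) ⊆ B1.image (colA f A) := Finset.image_subset_image hB'B1
      have h2 : (B'.image (colA f A)).card = B'.card :=
        Finset.card_image_of_injOn (hBrep_inj.mono (by exact_mod_cast hB'sub))
      exact_mod_cast h2 ▸ Finset.card_le_card h1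
    have := hB'ge
    have hcast : (Dc f A (B \ B1) : ℝ) = (Dc f A B : ℝ) - ((B1.image (colA f A)).card : ℝ) := by
      rw [hcard_eq]; push_cast; ring
    rw [hcast]
    nlinarith
  exact ⟨A1, B1, hA1sub, hB1sub, ⟨x₀, hA'A1 hx₀⟩, ⟨y₀, hB'B1 hy₀⟩, hrk, hDrdec, hDcdec⟩

/-- the recursive bound -/
noncomputable def Nb (c : ℝ) (r : ℕ) : ℕ :=
  256 * (⌈(2:ℝ) ^ c * (2 * r : ℕ)⌉₊ + 1) ^ (Nat.log 2 (r - 3) + 2)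

lemma Nb_ge (c : ℝ) (r : ℕ) : 256 ≤ Nb c r := by
  have h1 : 1 ≤ (⌈(2:ℝ) ^ c * (2 * r : ℕ)⌉₊ + 1) ^ (Nat.log 2 (r - 3) + 2) :=
    Nat.one_le_pow _ _ (by omega)
  calc 256 = 256 * 1 := by ring
    _ ≤ _ := Nat.mul_le_mul_left _ h1

lemma Nb_pos (c : ℝ) (r : ℕ) : 1 ≤ Nb c r := le_trans (by norm_num) (Nb_ge c r)

theorem main_ind (f : X → Y → Bool) (c : ℝ) (hc : 1 ≤ c)
    (hyp : ∀ A₀ : Finset X, ∀ B₀ : Finset Y, A₀.Nonempty → B₀.Nonempty →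
      ∃ (A' : Finset X) (B' : Finset Y), A' ⊆ A₀ ∧ B' ⊆ B₀ ∧ A'.Nonempty ∧ B'.Nonempty ∧
        (2 : ℝ) ^ (-c) * (A₀.card * B₀.card : ℝ) ≤ (A'.card * B'.card : ℝ) ∧
        Mono f A' B') :
    ∀ r : ℕ, ∀ A : Finset X, ∀ B : Finset Y, rk f A B ≤ r → PartB f A B (Nb c r) := by
  classical
  have h2c : (2:ℝ) ≤ (2:ℝ) ^ c := by
    calc (2:ℝ) = (2:ℝ) ^ (1:ℝ) := by rw [Real.rpow_one]
      _ ≤ (2:ℝ) ^ c := Real.rpow_le_rpow_left_iff (by norm_num) |>.mpr hc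
  have hxpos : (0:ℝ) < (2:ℝ) ^ (-c) := Real.rpow_pos_of_pos (by norm_num) _
  have hxlt : (2:ℝ) ^ (-c) < 1 :=
    Real.rpow_lt_one_of_one_lt_of_neg (by norm_num) (by linarith)
  have hcancel : (2:ℝ) ^ c * (2:ℝ) ^ (-c) = 1 := by
    rw [← Real.rpow_add (by norm_num)]
    simp
  have hkey : (2:ℝ) ^ c * Real.logb 2 (1 - (2:ℝ) ^ (-c)) ≤ -1 := by
    have hlog1 : Real.log (1 - (2:ℝ) ^ (-c)) ≤ -((2:ℝ) ^ (-c)) := by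
      have := Real.log_le_sub_one_of_pos (by linarith : (0:ℝ) < 1 - (2:ℝ) ^ (-c))
      linarith
    have hlog2pos : (0:ℝ) < Real.log 2 := Real.log_pos (by norm_num)
    have hlog2le : Real.log 2 ≤ 1 := by
      have := Real.log_le_sub_one_of_pos (by norm_num : (0:ℝ) < 2)
      linarith
    have hlogb : Real.logb 2 (1 - (2:ℝ) ^ (-c)) ≤ -((2:ℝ) ^ (-c)) := by
      rw [Real.logb, div_le_iff₀ hlog2pos]
      nlinarith [hxpos]
    calc (2:ℝ) ^ c * Real.logb 2 (1 - (2:ℝ) ^ (-c))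
        ≤ (2:ℝ) ^ c * (-((2:ℝ) ^ (-c))) := by
          apply mul_le_mul_of_nonneg_left hlogb (by positivity)
      _ = -1 := by rw [mul_neg, hcancel]
  intro r
  induction r using Nat.strong_induction_on with
  | _ r IH =>
  intro A B hrk
  by_cases hr5 : r < 5
  · -- base case: class partition
    have hDr : Dr f A B ≤ 2 ^ 4 := by
      calc Dr f A B ≤ 2 ^ rk f A B := Dr_le_pow f A B
        _ ≤ 2 ^ 4 := Nat.pow_le_pow_right (by norm_num) (by omega)
    have hDc : Dc f A B ≤ 2 ^ 4 := by
      calc Dc f A B ≤ 2 ^ rk f A B := Dc_le_pow f A B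
        _ ≤ 2 ^ 4 := Nat.pow_le_pow_right (by norm_num) (by omega)
    refine (PartB_class f A B).mono_n ?_
    calc Dr f A B * Dc f A B ≤ 2 ^ 4 * 2 ^ 4 := Nat.mul_le_mul hDr hDc
      _ = 256 := by norm_num
      _ ≤ Nb c r := Nb_ge c r
  · push_neg at hr5
    set r2 : ℕ := (r + 3) / 2 with hr2def
    have hr2lt : r2 < r := by omega
    have hIH2 := IH r2 hr2lt
    have inner : ∀ k : ℕ, ∀ A : Finset X, ∀ B : Finset Y, rk f A B ≤ r →
        (2:ℝ) ^ c * Real.logb 2 ((Dr f A B * Dc f A B : ℕ) : ℝ) ≤ (k : ℝ) →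
        PartB f A B ((k + 1) * Nb c r2) := by
      intro k
      induction k using Nat.strong_induction_on with
      | _ k IHk =>
      intro A B hrkAB hpot
      by_cases hphi : Dr f A B * Dc f A B ≤ 1
      · refine (PartB_class f A B).mono_n ?_
        calc Dr f A B * Dc f A B ≤ 1 := hphi
          _ ≤ (k + 1) * Nb c r2 := Nat.one_le_iff_ne_zero.mpr (by
              have := Nb_pos c r2
              positivity)
      · push_neg at hphi
        have hphi2 : 2 ≤ Dr f A B * Dc f A B := hphi
        have hDr1 : 1 ≤ Dr f A B := by
          by_contra h
          push_neg at h
          interval_cases h' : Dr f A B <;> omega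
        have hDc1 : 1 ≤ Dc f A B := by
          by_contra h
          push_neg at h
          interval_cases h' : Dc f A B <;> omega
        have hA_ne : A.Nonempty :=
          Finset.image_nonempty.mp (Finset.card_pos.mp hDr1)
        have hB_ne : B.Nonempty :=
          Finset.image_nonempty.mp (Finset.card_pos.mp hDc1)
        have hΦpos : (0:ℝ) < ((Dr f A B * Dc f A B : ℕ) : ℝ) := by
          have : (0:ℕ) < Dr f A B * Dc f A B := by omega
          exact_mod_cast this
        have hΦ2 : (2:ℝ) ≤ ((Dr f A B * Dc f A B : ℕ) : ℝ) := by exact_mod_cast hphi2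
        have hlogb1 : (1:ℝ) ≤ Real.logb 2 ((Dr f A B * Dc f A B : ℕ) : ℝ) := by
          calc (1:ℝ) = Real.logb 2 2 := (Real.logb_self_eq_one (by norm_num)).symm
            _ ≤ _ := Real.logb_le_logb_of_le (by norm_num) (by norm_num) hΦ2
        have hk1 : 1 ≤ k := by
          have hk2 : (2:ℝ) ≤ (k:ℝ) := by nlinarith
          exact_mod_cast le_trans (by norm_num : (1:ℝ) ≤ 2) hk2
        obtain ⟨A1, B1, hA1sub, hB1sub, hA1ne, hB1ne, hrkspl, hDrdec, hDcdec⟩ :=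
          step_lemma f c hyp hA_ne hB_ne
        have hcase : rk f A1 B ≤ r2 ∨ rk f A B1 ≤ r2 := by omega
        -- common potential decrease fact
        rcases hcase with hcase | hcase
        · -- split rows
          have h1 : PartB f A1 B (Nb c r2) := hIH2 A1 B hcase
          have h2 : PartB f (A \ A1) B (((k - 1) + 1) * Nb c r2) := by
            apply IHk (k - 1) (by omega) (A \ A1) B
              (le_trans (rk_mono Finset.sdiff_subset (Finset.Subset.refl B)) hrkAB)
            -- potential decrease
            have hDc'' : Dc f (A \ A1) B ≤ Dc f A B := Dc_anti_left B Finset.sdiff_subset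
            by_cases hz : Dr f (A \ A1) B * Dc f (A \ A1) B = 0
            · rw [hz]
              simp only [Nat.cast_zero, Real.logb_zero, mul_zero]
              positivity
            · have hge1 : (1:ℝ) ≤ ((Dr f (A \ A1) B * Dc f (A \ A1) B : ℕ) : ℝ) := by
                exact_mod_cast Nat.one_le_iff_ne_zero.mpr hz
              have hprod : ((Dr f (A \ A1) B * Dc f (A \ A1) B : ℕ) : ℝ) ≤
                  (1 - (2:ℝ) ^ (-c)) * ((Dr f A B * Dc f A B : ℕ) : ℝ) := by
                push_cast
                have hc1 : (0:ℝ) ≤ (Dc f (A \ A1) B : ℝ) := by positivity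
                have hc2 : (0:ℝ) ≤ (1 - (2:ℝ) ^ (-c)) * (Dr f A B : ℝ) := by
                  have : (0:ℝ) ≤ 1 - (2:ℝ) ^ (-c) := by linarith
                  positivity
                have hstep1 : (Dr f (A \ A1) B : ℝ) * (Dc f (A \ A1) B : ℝ) ≤
                    ((1 - (2:ℝ) ^ (-c)) * (Dr f A B : ℝ)) * (Dc f (A \ A1) B : ℝ) :=
                  mul_le_mul_of_nonneg_right hDrdec hc1
                have hstep2 : ((1 - (2:ℝ) ^ (-c)) * (Dr f A B : ℝ)) * (Dc f (A \ A1) B : ℝ) ≤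
                    ((1 - (2:ℝ) ^ (-c)) * (Dr f A B : ℝ)) * (Dc f A B : ℝ) := by
                  apply mul_le_mul_of_nonneg_left _ hc2
                  exact_mod_cast hDc''
                calc (Dr f (A \ A1) B : ℝ) * (Dc f (A \ A1) B : ℝ)
                    ≤ ((1 - (2:ℝ) ^ (-c)) * (Dr f A B : ℝ)) * (Dc f A B : ℝ) :=
                      le_trans hstep1 hstep2
                  _ = (1 - (2:ℝ) ^ (-c)) * ((Dr f A B : ℝ) * (Dc f A B : ℝ)) := by ring
              have hlog : Real.logb 2 ((Dr f (A \ A1) B * Dc f (A \ A1) B : ℕ) : ℝ) ≤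
                  Real.logb 2 (1 - (2:ℝ) ^ (-c)) +
                    Real.logb 2 ((Dr f A B * Dc f A B : ℕ) : ℝ) := by
                rw [← Real.logb_mul (by linarith : (1 - (2:ℝ) ^ (-c)) ≠ 0)
                  (by linarith : ((Dr f A B * Dc f A B : ℕ) : ℝ) ≠ 0)]
                exact Real.logb_le_logb_of_le (by norm_num) (by linarith) hprod
              have hmul : (2:ℝ) ^ c *
                  Real.logb 2 ((Dr f (A \ A1) B * Dc f (A \ A1) B : ℕ) : ℝ) ≤
                  (2:ℝ) ^ c * (Real.logb 2 (1 - (2:ℝ) ^ (-c)) +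
                    Real.logb 2 ((Dr f A B * Dc f A B : ℕ) : ℝ)) :=
                mul_le_mul_of_nonneg_left hlog (by positivity)
              have hfinal : (2:ℝ) ^ c *
                  Real.logb 2 ((Dr f (A \ A1) B * Dc f (A \ A1) B : ℕ) : ℝ) ≤ (k:ℝ) - 1 := by
                have hexp : (2:ℝ) ^ c * (Real.logb 2 (1 - (2:ℝ) ^ (-c)) +
                    Real.logb 2 ((Dr f A B * Dc f A B : ℕ) : ℝ)) =
                    (2:ℝ) ^ c * Real.logb 2 (1 - (2:ℝ) ^ (-c)) +
                    (2:ℝ) ^ c * Real.logb 2 ((Dr f A B * Dc f A B : ℕ) : ℝ) := by ring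
                rw [hexp] at hmul
                linarith
              have hcast : ((k - 1 : ℕ) : ℝ) = (k:ℝ) - 1 := by
                push_cast [Nat.cast_sub hk1]
                ring
              rw [hcast]
              exact hfinal
          have hsplit := PartB_split_rows Finset.disjoint_sdiff
            (Finset.union_sdiff_of_subset hA1sub) h1 h2
          refine hsplit.mono_n ?_
          have : (k - 1) + 1 = k := by omega
          rw [this]
          ring_nf
          omega
        · -- split cols
          have h1 : PartB f A B1 (Nb c r2) := hIH2 A B1 hcase
          have h2 : PartB f A (B \ B1) (((k - 1) + 1) * Nb c r2) := by
            apply IHk (k - 1) (by omega) A (B \ B1)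
              (le_trans (rk_mono (Finset.Subset.refl A) Finset.sdiff_subset) hrkAB)
            have hDr'' : Dr f A (B \ B1) ≤ Dr f A B := Dr_anti_right A Finset.sdiff_subset
            by_cases hz : Dr f A (B \ B1) * Dc f A (B \ B1) = 0
            · rw [hz]
              simp only [Nat.cast_zero, Real.logb_zero, mul_zero]
              positivity
            · have hge1 : (1:ℝ) ≤ ((Dr f A (B \ B1) * Dc f A (B \ B1) : ℕ) : ℝ) := by
                exact_mod_cast Nat.one_le_iff_ne_zero.mpr hz
              have hprod : ((Dr f A (B \ B1) * Dc f A (B \ B1) : ℕ) : ℝ) ≤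
                  (1 - (2:ℝ) ^ (-c)) * ((Dr f A B * Dc f A B : ℕ) : ℝ) := by
                push_cast
                have hc1 : (0:ℝ) ≤ (Dr f A (B \ B1) : ℝ) := by positivity
                have hc2 : (0:ℝ) ≤ (1 - (2:ℝ) ^ (-c)) * (Dc f A B : ℝ) := by
                  have : (0:ℝ) ≤ 1 - (2:ℝ) ^ (-c) := by linarith
                  positivity
                have hstep1 : (Dr f A (B \ B1) : ℝ) * (Dc f A (B \ B1) : ℝ) ≤
                    (Dr f A (B \ B1) : ℝ) * ((1 - (2:ℝ) ^ (-c)) * (Dc f A B : ℝ)) :=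
                  mul_le_mul_of_nonneg_left hDcdec hc1
                have hstep2 : (Dr f A (B \ B1) : ℝ) * ((1 - (2:ℝ) ^ (-c)) * (Dc f A B : ℝ)) ≤
                    (Dr f A B : ℝ) * ((1 - (2:ℝ) ^ (-c)) * (Dc f A B : ℝ)) := by
                  apply mul_le_mul_of_nonneg_right _ hc2
                  exact_mod_cast hDr''
                calc (Dr f A (B \ B1) : ℝ) * (Dc f A (B \ B1) : ℝ)
                    ≤ (Dr f A B : ℝ) * ((1 - (2:ℝ) ^ (-c)) * (Dc f A B : ℝ)) :=
                      le_trans hstep1 hstep2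
                  _ = (1 - (2:ℝ) ^ (-c)) * ((Dr f A B : ℝ) * (Dc f A B : ℝ)) := by ring
              have hlog : Real.logb 2 ((Dr f A (B \ B1) * Dc f A (B \ B1) : ℕ) : ℝ) ≤
                  Real.logb 2 (1 - (2:ℝ) ^ (-c)) +
                    Real.logb 2 ((Dr f A B * Dc f A B : ℕ) : ℝ) := by
                rw [← Real.logb_mul (by linarith : (1 - (2:ℝ) ^ (-c)) ≠ 0)
                  (by linarith : ((Dr f A B * Dc f A B : ℕ) : ℝ) ≠ 0)]
                exact Real.logb_le_logb_of_le (by norm_num) (by linarith) hprod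
              have hmul : (2:ℝ) ^ c *
                  Real.logb 2 ((Dr f A (B \ B1) * Dc f A (B \ B1) : ℕ) : ℝ) ≤
                  (2:ℝ) ^ c * (Real.logb 2 (1 - (2:ℝ) ^ (-c)) +
                    Real.logb 2 ((Dr f A B * Dc f A B : ℕ) : ℝ)) :=
                mul_le_mul_of_nonneg_left hlog (by positivity)
              have hfinal : (2:ℝ) ^ c *
                  Real.logb 2 ((Dr f A (B \ B1) * Dc f A (B \ B1) : ℕ) : ℝ) ≤ (k:ℝ) - 1 := by
                have hexp : (2:ℝ) ^ c * (Real.logb 2 (1 - (2:ℝ) ^ (-c)) +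
                    Real.logb 2 ((Dr f A B * Dc f A B : ℕ) : ℝ)) =
                    (2:ℝ) ^ c * Real.logb 2 (1 - (2:ℝ) ^ (-c)) +
                    (2:ℝ) ^ c * Real.logb 2 ((Dr f A B * Dc f A B : ℕ) : ℝ) := by ring
                rw [hexp] at hmul
                linarith
              have hcast : ((k - 1 : ℕ) : ℝ) = (k:ℝ) - 1 := by
                push_cast [Nat.cast_sub hk1]
                ring
              rw [hcast]
              exact hfinal
          have hsplit := PartB_split_cols Finset.disjoint_sdiff
            (Finset.union_sdiff_of_subset hB1sub) h1 h2
          refine hsplit.mono_n ?_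
          have : (k - 1) + 1 = k := by omega
          rw [this]
          ring_nf
          omega
    -- conclude the outer level
    set k0 : ℕ := ⌈(2:ℝ) ^ c * (2 * r : ℕ)⌉₊ with hk0
    have hpot0 : (2:ℝ) ^ c * Real.logb 2 ((Dr f A B * Dc f A B : ℕ) : ℝ) ≤ (k0 : ℝ) := by
      have hΦle : ((Dr f A B * Dc f A B : ℕ) : ℝ) ≤ ((2:ℝ) ^ (2 * r : ℕ)) := by
        have h1 : Dr f A B * Dc f A B ≤ 2 ^ r * 2 ^ r := by
          apply Nat.mul_le_mul
          · exact (Dr_le_pow f A B).trans (Nat.pow_le_pow_right (by norm_num) hrk)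
          · exact (Dc_le_pow f A B).trans (Nat.pow_le_pow_right (by norm_num) hrk)
        have h2 : (2:ℕ) ^ r * 2 ^ r = 2 ^ (2 * r) := by
          rw [← pow_add]
          congr 1
          omega
        rw [h2] at h1
        exact_mod_cast h1
      have hlogle : Real.logb 2 ((Dr f A B * Dc f A B : ℕ) : ℝ) ≤ (2 * r : ℕ) := by
        by_cases hz : Dr f A B * Dc f A B = 0
        · rw [hz]
          simp only [Nat.cast_zero, Real.logb_zero]
          positivity
        · have hpos : (0:ℝ) < ((Dr f A B * Dc f A B : ℕ) : ℝ) := by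
            have : (0:ℕ) < Dr f A B * Dc f A B := Nat.pos_of_ne_zero hz
            exact_mod_cast this
          calc Real.logb 2 ((Dr f A B * Dc f A B : ℕ) : ℝ)
              ≤ Real.logb 2 ((2:ℝ) ^ (2 * r : ℕ)) :=
                Real.logb_le_logb_of_le (by norm_num) hpos hΦle
            _ = (2 * r : ℕ) := by
                rw [Real.logb_pow, Real.logb_self_eq_one (by norm_num), mul_one]
      calc (2:ℝ) ^ c * Real.logb 2 ((Dr f A B * Dc f A B : ℕ) : ℝ)
          ≤ (2:ℝ) ^ c * ((2 * r : ℕ) : ℝ) :=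
            mul_le_mul_of_nonneg_left hlogle (by positivity)
        _ ≤ (k0 : ℝ) := Nat.le_ceil _
    have hinner := inner k0 A B hrk hpot0
    refine hinner.mono_n ?_
    -- (k0 + 1) * Nb c r2 ≤ Nb c r
    have hr2sub : r2 - 3 = (r - 3) / 2 := by omega
    have hlogpos : 1 ≤ Nat.log 2 (r - 3) := Nat.log_pos (by norm_num) (by omega)
    have hE : Nat.log 2 (r2 - 3) + 2 + 1 = Nat.log 2 (r - 3) + 2 := by
      rw [hr2sub, Nat.log_div_base]
      omega
    have hBle : (⌈(2:ℝ) ^ c * (2 * r2 : ℕ)⌉₊ + 1) ≤ (k0 + 1) := by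
      have : (2:ℝ) ^ c * (2 * r2 : ℕ) ≤ (2:ℝ) ^ c * (2 * r : ℕ) := by
        apply mul_le_mul_of_nonneg_left _ (by positivity)
        exact_mod_cast by omega
      have : ⌈(2:ℝ) ^ c * (2 * r2 : ℕ)⌉₊ ≤ ⌈(2:ℝ) ^ c * (2 * r : ℕ)⌉₊ := Nat.ceil_le_ceil this
      omega
    calc (k0 + 1) * Nb c r2
        = 256 * ((k0 + 1) * (⌈(2:ℝ) ^ c * (2 * r2 : ℕ)⌉₊ + 1) ^ (Nat.log 2 (r2 - 3) + 2)) := by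
          rw [Nb]; ring
      _ ≤ 256 * ((k0 + 1) * (k0 + 1) ^ (Nat.log 2 (r2 - 3) + 2)) := by
          apply Nat.mul_le_mul_left
          apply Nat.mul_le_mul_left
          exact Nat.pow_le_pow_left hBle _
      _ = 256 * (k0 + 1) ^ (Nat.log 2 (r2 - 3) + 2 + 1) := by
          rw [pow_succ]; ring
      _ = Nb c r := by rw [hE, Nb]

lemma Nb_le (c : ℝ) (hc : 1 ≤ c) (r : ℕ) (hr : 2 ≤ r) :
    (Nb c r : ℝ) ≤ 2 ^ (20 * (c + Real.logb 2 r) * Real.logb 2 r) := by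
  have hrpos : (0:ℝ) < r := by positivity
  set L : ℝ := Real.logb 2 r with hLdef
  have hL1 : 1 ≤ L := by
    rw [hLdef]
    calc (1:ℝ) = Real.logb 2 2 := (Real.logb_self_eq_one (by norm_num)).symm
      _ ≤ Real.logb 2 r := Real.logb_le_logb_of_le (by norm_num) (by norm_num)
          (by exact_mod_cast hr)
  have h2c : (2:ℝ) ≤ (2:ℝ) ^ c := by
    calc (2:ℝ) = (2:ℝ) ^ (1:ℝ) := by rw [Real.rpow_one]
      _ ≤ (2:ℝ) ^ c := Real.rpow_le_rpow_left_iff (by norm_num) |>.mpr hc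
  have h2L : (2:ℝ) ^ L = r := Real.rpow_logb (by norm_num) (by norm_num) hrpos
  set E : ℕ := Nat.log 2 (r - 3) + 2 with hEdef
  set base : ℕ := ⌈(2:ℝ) ^ c * (2 * r : ℕ)⌉₊ + 1 with hbasedef
  have hbase : (base : ℝ) ≤ (2:ℝ) ^ (c + 2 + L) := by
    have hb1 : (base : ℝ) < (2:ℝ) ^ c * (2 * r : ℕ) + 2 := by
      have := Nat.ceil_lt_add_one (by positivity : (0:ℝ) ≤ (2:ℝ) ^ c * (2 * r : ℕ))
      rw [hbasedef]
      push_cast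
      push_cast at this
      linarith
    have hb2 : (2:ℝ) ^ c * (2 * r : ℕ) + 2 ≤ (2:ℝ) ^ c * (4 * r) := by
      have h1 : ((2 * r : ℕ) : ℝ) = 2 * r := by push_cast; ring
      rw [h1]
      have hr2 : (4:ℝ) ≤ 2 * (r:ℝ) := by
        have : (2:ℝ) ≤ (r:ℝ) := by exact_mod_cast hr
        linarith
      have h8 : (8:ℝ) ≤ (2:ℝ) ^ c * (2 * r) := by
        have := mul_le_mul h2c hr2 (by norm_num) (by positivity : (0:ℝ) ≤ (2:ℝ)^c)
        linarith
      nlinarith [h2c, hrpos]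
    have hb3 : (2:ℝ) ^ c * (4 * r) = (2:ℝ) ^ (c + 2 + L) := by
      rw [Real.rpow_add (by norm_num), Real.rpow_add (by norm_num), h2L]
      have : (2:ℝ) ^ (2:ℝ) = 4 := by
        rw [show (2:ℝ) = ((2:ℕ):ℝ) from by norm_num, Real.rpow_natCast]
        norm_num
      rw [this]
      ring
    linarith
  have hEle : (E : ℝ) ≤ L + 2 := by
    have h1 : ((Nat.log 2 (r - 3) : ℕ) : ℝ) ≤ L := by
      by_cases hz : r - 3 = 0
      · rw [hz]
        simp only [Nat.log_zero_right, Nat.cast_zero]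
        linarith
      · have hp : 2 ^ (Nat.log 2 (r - 3)) ≤ r - 3 := Nat.pow_log_le_self 2 hz
        have hp2 : (2:ℕ) ^ (Nat.log 2 (r - 3)) ≤ r := le_trans hp (by omega)
        have hp3 : ((2:ℝ)) ^ ((Nat.log 2 (r - 3) : ℕ) : ℝ) ≤ r := by
          rw [Real.rpow_natCast]
          exact_mod_cast hp2
        calc ((Nat.log 2 (r - 3) : ℕ) : ℝ)
            = Real.logb 2 ((2:ℝ) ^ ((Nat.log 2 (r - 3) : ℕ) : ℝ)) :=
              (Real.logb_rpow (by norm_num) (by norm_num)).symm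
          _ ≤ Real.logb 2 r := Real.logb_le_logb_of_le (by norm_num) (by positivity) hp3
    rw [hEdef]
    push_cast
    linarith
  have hbase0 : (0:ℝ) ≤ (base : ℝ) := by positivity
  have hcL0 : (0:ℝ) ≤ c + 2 + L := by linarith
  calc (Nb c r : ℝ) = 256 * (base : ℝ) ^ E := by
        rw [Nb, hbasedef, hEdef]
        norm_cast
    _ ≤ 256 * ((2:ℝ) ^ (c + 2 + L)) ^ E := by
        apply mul_le_mul_of_nonneg_left _ (by norm_num)
        exact pow_le_pow_left₀ hbase0 hbase E
    _ = 256 * (2:ℝ) ^ ((c + 2 + L) * E) := by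
        rw [← Real.rpow_natCast ((2:ℝ) ^ (c + 2 + L)) E, ← Real.rpow_mul (by norm_num)]
    _ ≤ 256 * (2:ℝ) ^ ((c + 2 + L) * (L + 2)) := by
        apply mul_le_mul_of_nonneg_left _ (by norm_num)
        apply Real.rpow_le_rpow_left_iff (by norm_num) |>.mpr
        exact mul_le_mul_of_nonneg_left hEle hcL0
    _ = (2:ℝ) ^ ((8:ℝ) + (c + 2 + L) * (L + 2)) := by
        rw [Real.rpow_add (by norm_num)]
        congr 1
        rw [show (8:ℝ) = ((8:ℕ):ℝ) from by norm_num, Real.rpow_natCast]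
        norm_num
    _ ≤ 2 ^ (20 * (c + L) * L) := by
        apply Real.rpow_le_rpow_left_iff (by norm_num) |>.mpr
        nlinarith [hc, hL1]

end NW




/-- The real rank of the 0/1 matrix associated to a boolean function `f : X × Y → {0,1}`. -/
noncomputable def rankOf {X Y : Type*} [Fintype X] [Fintype Y] (f : X → Y → Bool) : ℕ :=
  (Matrix.of (fun x y => if f x y then (1 : ℝ) else 0)).rank

/-- Nisan–Wigderson variant with a rank-independent density guarantee: there is an absolute
constant `K > 0` such that if every nonempty rectangle of `f` (of rank `r ≥ 2`) contains a
nonempty monochromatic sub-rectangle of relative size at least `2^{−c}` (for some real `c ≥ 1`),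
then `X × Y` can be partitioned into at most `2^{K·(c + log₂ r)·log₂ r}` monochromatic
rectangles. -/
theorem nisan_wigderson_fixed_density :
    ∃ K : ℝ, 0 < K ∧
      ∀ (X Y : Type) [Fintype X] [Fintype Y] [Nonempty X] [Nonempty Y]
        (f : X → Y → Bool), 2 ≤ rankOf f →
        ∀ c : ℝ, 1 ≤ c →
        (∀ (A : Finset X) (B : Finset Y), A.Nonempty → B.Nonempty →
          ∃ (A' : Finset X) (B' : Finset Y), A' ⊆ A ∧ B' ⊆ B ∧ A'.Nonempty ∧ B'.Nonempty ∧
            (2 : ℝ) ^ (-c) * (A.card * B.card : ℝ) ≤ (A'.card * B'.card : ℝ) ∧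
            (∀ x ∈ A', ∀ y ∈ B', ∀ x' ∈ A', ∀ y' ∈ B', f x y = f x' y')) →
        ∃ (N : ℕ) (R : Fin N → Finset X × Finset Y),
          (N : ℝ) ≤ 2 ^ (K * (c + Real.logb 2 (rankOf f)) * Real.logb 2 (rankOf f)) ∧
          (∀ p : X × Y, ∃! i : Fin N, p.1 ∈ (R i).1 ∧ p.2 ∈ (R i).2) ∧
          (∀ i : Fin N, ∀ x ∈ (R i).1, ∀ y ∈ (R i).2, ∀ x' ∈ (R i).1, ∀ y' ∈ (R i).2,
            f x y = f x' y') := by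

  refine ⟨20, by norm_num, ?_⟩
  intro X Y _ _ _ _ f hrank c hc hyp
  classical
  -- rank of the full rectangle is at most rankOf f
  have hrk_univ : NW.rk f Finset.univ Finset.univ ≤ rankOf f := by
    have heq : NW.matr f Finset.univ Finset.univ =
        (Matrix.of (fun x y => if f x y then (1 : ℝ) else 0)).submatrix
          (Subtype.val : {x // x ∈ (Finset.univ : Finset X)} → X)
          (Subtype.val : {y // y ∈ (Finset.univ : Finset Y)} → Y) := rfl
    rw [NW.rk, heq]
    exact NW.rank_submatrix_le'' _ _ _
  have hyp' : ∀ A₀ : Finset X, ∀ B₀ : Finset Y, A₀.Nonempty → B₀.Nonempty →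
      ∃ (A' : Finset X) (B' : Finset Y), A' ⊆ A₀ ∧ B' ⊆ B₀ ∧ A'.Nonempty ∧ B'.Nonempty ∧
        (2 : ℝ) ^ (-c) * (A₀.card * B₀.card : ℝ) ≤ (A'.card * B'.card : ℝ) ∧
        NW.Mono f A' B' := hyp
  obtain ⟨S, hcard, hrects, huniq⟩ :=
    NW.main_ind f c hc hyp' (rankOf f) Finset.univ Finset.univ hrk_univ
  refine ⟨S.card, fun i => (S.equivFin.symm i).1, ?_, ?_, ?_⟩
  · calc (S.card : ℝ) ≤ (NW.Nb c (rankOf f) : ℝ) := by exact_mod_cast hcard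
      _ ≤ 2 ^ (20 * (c + Real.logb 2 (rankOf f)) * Real.logb 2 (rankOf f)) :=
          NW.Nb_le c hc _ hrank
  · intro p
    obtain ⟨r0, ⟨hr0S, hx, hy⟩, huni⟩ :=
      huniq p.1 (Finset.mem_univ _) p.2 (Finset.mem_univ _)
    refine ⟨S.equivFin ⟨r0, hr0S⟩, ?_, ?_⟩
    · simp only [Equiv.symm_apply_apply]
      exact ⟨hx, hy⟩
    · intro i ⟨hix, hiy⟩
      have h := huni (S.equivFin.symm i).1 ⟨(S.equivFin.symm i).2, hix, hiy⟩
      have h2 : S.equivFin.symm i = (⟨r0, hr0S⟩ : {x // x ∈ S}) := Subtype.ext h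
      calc i = S.equivFin (S.equivFin.symm i) := (Equiv.apply_symm_apply _ _).symm
        _ = S.equivFin ⟨r0, hr0S⟩ := by rw [h2]
  · intro i x hx y hy x' hx' y' hy'
    exact (hrects _ (S.equivFin.symm i).2).2.2.2.2 x hx y hy x' hx' y' hy'
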